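/- Let f = (f_1,…,f_p) with f_i ∈ ℂ[z_1,…,z_n] be a polynomial mapping ℂ^n → ℂ^p. For a linear map A : ℂ^n → ℂ^p define the Rabier function ν(A) = inf_{‖φ‖=1} ‖A*φ‖, where A* is the adjoint of A and the infimum is over φ ∈ ℂ^p of norm 1. Then the Kuo-distance and Rabier-function definitions of asymptotic critical values coincide: for every c ∈ ℂ^p, there exists a sequence (x_t)_{t∈ℕ} in ℂ^n with ‖x_t‖ → ∞, f(x_t) → c and ‖x_t‖·κ(df(x_t)) → 0 if and only if there exists a sequence (y_t)_{t∈ℕ} in ℂ^n with ‖y_t‖ → ∞, f(y_t) → c and ‖y_t‖·ν(df(y_t)) → 0. -/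

import Mathlib

open MvPolynomial Filter

/-- Euclidean norm on `ℂ^m`. -/
noncomputable def eucNorm {m : ℕ} (v : Fin m → ℂ) : ℝ :=
  Real.sqrt (∑ k, ‖v k‖ ^ 2)

/-- The differential of `f_j` at `x` applied to `v`. -/
noncomputable def pdiff {n p : ℕ} (f : Fin p → MvPolynomial (Fin n) ℂ)
    (x : Fin n → ℂ) (j : Fin p) (v : Fin n → ℂ) : ℂ :=
  ∑ k, MvPolynomial.eval x (MvPolynomial.pderiv k (f j)) * v k

/-- Operator norm of `w_j(x)`, the restriction of `df_j(x)` to the kernel of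
`v ↦ (df_i(x) v)_{i ≠ j}`. -/
noncomputable def wNorm {n p : ℕ} (f : Fin p → MvPolynomial (Fin n) ℂ)
    (x : Fin n → ℂ) (j : Fin p) : ℝ :=
  sSup { r : ℝ | ∃ v : Fin n → ℂ,
    (∀ i : Fin p, i ≠ j → pdiff f x i v = 0) ∧ eucNorm v ≤ 1 ∧ r = ‖pdiff f x j v‖ }

/-- The Kuo distance `κ(df(x)) = min_{1 ≤ j ≤ p} ‖w_j(x)‖`. -/
noncomputable def kuoDist {n p : ℕ} (f : Fin p → MvPolynomial (Fin n) ℂ)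
    (x : Fin n → ℂ) : ℝ :=
  ⨅ j : Fin p, wNorm f x j

/-- The set of asymptotic critical values of the polynomial map `f : ℂ^n → ℂ^p`. -/
def Kinf {n p : ℕ} (f : Fin p → MvPolynomial (Fin n) ℂ) : Set (Fin p → ℂ) :=
  { c | ∃ x : ℕ → (Fin n → ℂ),
      Tendsto (fun t => eucNorm (x t)) atTop atTop ∧
      Tendsto (fun t j => MvPolynomial.eval (x t) (f j)) atTop (nhds c) ∧
      Tendsto (fun t => eucNorm (x t) * kuoDist f (x t)) atTop (nhds 0) }

/-- The Rabier function `ν(df(x)) = inf_{‖φ‖=1} ‖(df(x))* φ‖`, where the adjoint is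
taken with respect to the standard Hermitian inner products:
`((df(x))* φ)_k = Σ_j conj(∂f_j/∂z_k (x)) · φ_j`. -/
noncomputable def rabier {n p : ℕ} (f : Fin p → MvPolynomial (Fin n) ℂ)
    (x : Fin n → ℂ) : ℝ :=
  sInf { r : ℝ | ∃ φ : Fin p → ℂ, eucNorm φ = 1 ∧
    r = eucNorm (fun k =>
      ∑ j, (starRingEnd ℂ) (MvPolynomial.eval x (MvPolynomial.pderiv k (f j))) * φ j) }

section KuoRabierAux

open Finset

variable {n p : ℕ} (f : Fin p → MvPolynomial (Fin n) ℂ) (x : Fin n → ℂ)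

/-- the conjugate gradient vectors -/
noncomputable def gv (j : Fin p) : EuclideanSpace ℂ (Fin n) :=
  (WithLp.equiv 2 (Fin n → ℂ)).symm fun k =>
    (starRingEnd ℂ) (MvPolynomial.eval x (MvPolynomial.pderiv k (f j)))

lemma eucNorm_eq {m : ℕ} (v : Fin m → ℂ) :
    eucNorm v = ‖(WithLp.equiv 2 (Fin m → ℂ)).symm v‖ := by
  rw [EuclideanSpace.norm_eq]
  simp [eucNorm, WithLp.equiv_symm_apply, PiLp.toLp_apply]

lemma eucNorm_nonneg {m : ℕ} (v : Fin m → ℂ) : 0 ≤ eucNorm v := Real.sqrt_nonneg _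

lemma pdiff_eq (j : Fin p) (v : Fin n → ℂ) :
    pdiff f x j v = inner ℂ (gv f x j) ((WithLp.equiv 2 (Fin n → ℂ)).symm v) := by
  simp [pdiff, gv, PiLp.inner_apply, RCLike.inner_apply, WithLp.equiv_symm_apply, PiLp.toLp_apply, mul_comm]

lemma adj_eq (φ : Fin p → ℂ) :
    ((WithLp.equiv 2 (Fin n → ℂ)).symm fun k =>
      ∑ j, (starRingEnd ℂ) (MvPolynomial.eval x (MvPolynomial.pderiv k (f j))) * φ j)
      = ∑ j, φ j • gv f x j := by
  ext k
  rw [WithLp.equiv_symm_apply, PiLp.toLp_apply]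
  rw [show (∑ j, φ j • gv f x j) k = ∑ j, (φ j • gv f x j) k by
    simp [WithLp.ofLp_sum]]
  simp [gv, WithLp.equiv_symm_apply, mul_comm]

/-- The defining set of `wNorm`. -/
def wSet (j : Fin p) : Set ℝ :=
  { r : ℝ | ∃ v : Fin n → ℂ,
    (∀ i : Fin p, i ≠ j → pdiff f x i v = 0) ∧ eucNorm v ≤ 1 ∧ r = ‖pdiff f x j v‖ }

lemma wNorm_def (j : Fin p) : wNorm f x j = sSup (wSet f x j) := rfl

lemma zero_mem_wSet (j : Fin p) : (0 : ℝ) ∈ wSet f x j := by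
  refine ⟨0, fun i _ => ?_, ?_, ?_⟩ <;> simp [pdiff, eucNorm]

lemma wSet_bddAbove (j : Fin p) : BddAbove (wSet f x j) := by
  refine ⟨‖gv f x j‖, fun r hr => ?_⟩
  obtain ⟨v, _, hv1, rfl⟩ := hr
  rw [pdiff_eq]
  calc ‖(inner ℂ (gv f x j) ((WithLp.equiv 2 (Fin n → ℂ)).symm v) : ℂ)‖
      ≤ ‖gv f x j‖ * ‖(WithLp.equiv 2 (Fin n → ℂ)).symm v‖ := norm_inner_le_norm _ _
    _ ≤ ‖gv f x j‖ * 1 := by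
        apply mul_le_mul_of_nonneg_left _ (norm_nonneg _)
        rw [← eucNorm_eq]; exact hv1
    _ = ‖gv f x j‖ := mul_one _

lemma wNorm_nonneg (j : Fin p) : 0 ≤ wNorm f x j :=
  le_csSup (wSet_bddAbove f x j) (zero_mem_wSet f x j)

lemma kuoDist_nonneg : 0 ≤ kuoDist f x :=
  Real.iInf_nonneg (wNorm_nonneg f x)

/-- The defining set of `rabier`. -/
def rSet : Set ℝ :=
  { r : ℝ | ∃ φ : Fin p → ℂ, eucNorm φ = 1 ∧
    r = eucNorm (fun k =>
      ∑ j, (starRingEnd ℂ) (MvPolynomial.eval x (MvPolynomial.pderiv k (f j))) * φ j) }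

lemma rabier_def : rabier f x = sInf (rSet f x) := rfl

lemma rSet_nonneg : ∀ r ∈ rSet f x, 0 ≤ r := by
  rintro r ⟨φ, _, rfl⟩; exact eucNorm_nonneg _

lemma rSet_bddBelow : BddBelow (rSet f x) := ⟨0, fun r hr => rSet_nonneg f x r hr⟩

lemma rabier_nonneg : 0 ≤ rabier f x := Real.sInf_nonneg (rSet_nonneg f x)

lemma rSet_nonempty (hp : 1 ≤ p) : (rSet f x).Nonempty := by
  have j0 : Fin p := ⟨0, hp⟩
  refine ⟨_, Pi.single j0 1, ?_, rfl⟩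
  rw [eucNorm]
  have h1 : ∀ k : Fin p, ‖(Pi.single j0 1 : Fin p → ℂ) k‖ ^ 2 = if k = j0 then 1 else 0 := by
    intro k; by_cases h : k = j0 <;> simp [Pi.single_apply, h]
  rw [Finset.sum_congr rfl fun k _ => h1 k, Finset.sum_ite_eq' univ j0 fun _ => (1:ℝ)]
  simp

/-- `ν ≤ ‖w_j‖` for each `j`. -/
lemma rabier_le_wNorm (j : Fin p) : rabier f x ≤ wNorm f x j := by
  classical
  set E := EuclideanSpace ℂ (Fin n)
  set g : Fin p → E := gv f x with hg
  set V : Submodule ℂ E := Submodule.span ℂ (Set.range fun i : {i : Fin p // i ≠ j} => g i)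
    with hV
  set K : E := (V.orthogonalProjectionOnto (g j) : E) with hK
  have hKV : K ∈ V := Submodule.coe_mem _
  set u : E := g j - K with hu
  have huV : u ∈ Vᗮ := by exact V.sub_starProjection_mem_orthogonal (g j)
  -- coefficients of K
  obtain ⟨c, hc⟩ := (Submodule.mem_span_range_iff_exists_fun ℂ).mp hKV
  set φ : Fin p → ℂ := fun i => if h : i = j then 1 else -(c ⟨i, h⟩) with hφ
  have hsum : ∑ i, φ i • g i = u := by
    rw [← Finset.add_sum_erase univ (fun i => φ i • g i) (mem_univ j)]
    have h1 : φ j = 1 := by simp [hφ]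
    have h2 : ∑ i ∈ univ.erase j, φ i • g i = -∑ i : {i : Fin p // i ≠ j}, c i • g i := by
      rw [Finset.sum_subtype (p := fun i => i ≠ j) (univ.erase j)
        (fun i => by simp) (fun i => φ i • g i)]
      rw [← Finset.sum_neg_distrib]
      refine Finset.sum_congr rfl fun i _ => ?_
      have h3 : φ (i : Fin p) = -(c i) := by
        simp only [hφ]; exact dif_neg i.2
      rw [h3, neg_smul]
    rw [h1, h2, hc, one_smul, hu]
    abel
  -- norm of φ is at least 1
  have hφj : ‖φ j‖ = 1 := by simp [hφ]
  have hφ1 : 1 ≤ eucNorm φ := by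
    rw [eucNorm, Real.one_le_sqrt]
    calc (1:ℝ) = ‖φ j‖ ^ 2 := by rw [hφj]; norm_num
      _ ≤ ∑ i, ‖φ i‖ ^ 2 := Finset.single_le_sum (f := fun i => ‖φ i‖ ^ 2)
            (fun i _ => sq_nonneg _) (mem_univ j)
  have hφpos : 0 < eucNorm φ := lt_of_lt_of_le one_pos hφ1
  -- normalized φ
  set ψ : Fin p → ℂ := fun i => ((eucNorm φ : ℂ))⁻¹ * φ i with hψ
  have hψnorm : eucNorm ψ = 1 := by
    have : ψ = (fun i => ((eucNorm φ : ℂ))⁻¹ • φ i) := rfl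
    rw [eucNorm_eq, this]
    have : ((WithLp.equiv 2 (Fin p → ℂ)).symm fun i => ((eucNorm φ : ℂ))⁻¹ • φ i)
        = ((eucNorm φ : ℂ))⁻¹ • (WithLp.equiv 2 (Fin p → ℂ)).symm φ := rfl
    rw [this, norm_smul, ← eucNorm_eq]
    rw [norm_inv, Complex.norm_real, Real.norm_eq_abs, abs_of_pos hφpos,
      inv_mul_cancel₀ (ne_of_gt hφpos)]
  have hψsum : ∑ i, ψ i • g i = ((eucNorm φ : ℂ))⁻¹ • u := by
    rw [← hsum, Finset.smul_sum]
    exact Finset.sum_congr rfl fun i _ => by rw [hψ, mul_smul]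
  -- the rabier value for ψ
  have hmem : ‖((eucNorm φ : ℂ))⁻¹ • u‖ ∈ rSet f x := by
    refine ⟨ψ, hψnorm, ?_⟩
    conv_rhs => rw [eucNorm_eq, adj_eq f x ψ, hψsum]
  have hle : rabier f x ≤ ‖((eucNorm φ : ℂ))⁻¹ • u‖ :=
    csInf_le (rSet_bddBelow f x) hmem
  have hval : ‖((eucNorm φ : ℂ))⁻¹ • u‖ ≤ ‖u‖ := by
    rw [norm_smul]
    calc ‖((eucNorm φ : ℂ))⁻¹‖ * ‖u‖ ≤ 1 * ‖u‖ := by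
          apply mul_le_mul_of_nonneg_right _ (norm_nonneg _)
          rw [norm_inv, Complex.norm_real, Real.norm_eq_abs, abs_of_pos hφpos]
          exact inv_le_one_of_one_le₀ hφ1
      _ = ‖u‖ := one_mul _
  -- finally ‖u‖ ≤ wNorm f x j
  have hfinal : ‖u‖ ≤ wNorm f x j := by
    rcases eq_or_ne u 0 with h0 | h0
    · rw [h0, norm_zero]; exact wNorm_nonneg f x j
    · set v : E := ((‖u‖ : ℂ))⁻¹ • u with hv
      have hvV : v ∈ Vᗮ := Submodule.smul_mem _ _ huV
      have hvnorm : ‖v‖ = 1 := by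
        rw [hv, norm_smul, norm_inv, Complex.norm_real, Real.norm_eq_abs,
          abs_of_pos (norm_pos_iff.mpr h0), inv_mul_cancel₀ (norm_ne_zero_iff.mpr h0)]
      have hmemW : ‖u‖ ∈ wSet f x j := by
        refine ⟨(WithLp.equiv 2 (Fin n → ℂ)) v, ?_, ?_, ?_⟩
        · intro i hij
          rw [pdiff_eq, Equiv.symm_apply_apply]
          exact (Submodule.mem_orthogonal V v).mp hvV (g i)
            (Submodule.subset_span ⟨⟨i, hij⟩, rfl⟩)
        · rw [eucNorm_eq, Equiv.symm_apply_apply, hvnorm]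
        · rw [pdiff_eq, Equiv.symm_apply_apply]
          have hgj : g j = K + u := by rw [hu]; abel
          have h1 : (inner ℂ K v : ℂ) = 0 := (Submodule.mem_orthogonal V v).mp hvV K hKV
          have h2 : (inner ℂ u v : ℂ) = (‖u‖ : ℂ) := by
            rw [hv, inner_smul_right, inner_self_eq_norm_sq_to_K]
            have hgen : ∀ a : ℂ, a ≠ 0 → a⁻¹ * a ^ 2 = a := fun a ha => by
              rw [sq, ← mul_assoc, inv_mul_cancel₀ ha, one_mul]
            exact hgen _ (by exact_mod_cast norm_ne_zero_iff.mpr h0)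
          show ‖u‖ = ‖(inner ℂ (g j) v : ℂ)‖
          rw [hgj, inner_add_left, h1, h2, zero_add]
          simp
      exact le_csSup (wSet_bddAbove f x j) hmemW
  exact hle.trans (hval.trans hfinal)

lemma rabier_le_kuoDist (hp : 1 ≤ p) : rabier f x ≤ kuoDist f x := by
  have : Nonempty (Fin p) := ⟨⟨0, hp⟩⟩
  exact le_ciInf (rabier_le_wNorm f x)

/-- `κ ≤ √p · ν`. -/
lemma kuoDist_le_sqrt_mul_rabier (hp : 1 ≤ p) :
    kuoDist f x ≤ Real.sqrt p * rabier f x := by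
  classical
  have : Nonempty (Fin p) := ⟨⟨0, hp⟩⟩
  have hsp : (0:ℝ) < Real.sqrt p := Real.sqrt_pos.mpr (by exact_mod_cast hp)
  rw [show Real.sqrt p * rabier f x = Real.sqrt p * sInf (rSet f x) from rfl]
  have key : ∀ s ∈ rSet f x, kuoDist f x ≤ Real.sqrt p * s := by
    rintro s ⟨φ, hφ, rfl⟩
    set g : Fin p → EuclideanSpace ℂ (Fin n) := gv f x with hg
    set s' : ℝ := ‖∑ i, φ i • g i‖ with hs'
    have hseq : eucNorm (fun k =>
        ∑ j, (starRingEnd ℂ) (MvPolynomial.eval x (MvPolynomial.pderiv k (f j))) * φ j)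
        = s' := by rw [eucNorm_eq, adj_eq]
    rw [hseq]
    -- pick the max coordinate
    obtain ⟨j0, hj0⟩ := Finite.exists_max (fun i => ‖φ i‖)
    have hsum1 : ∑ i, ‖φ i‖ ^ 2 = 1 := by
      rw [eucNorm] at hφ; exact Real.sqrt_eq_one.mp hφ
    have hmax : 1 ≤ (p : ℝ) * ‖φ j0‖ ^ 2 := by
      calc (1:ℝ) = ∑ i, ‖φ i‖ ^ 2 := hsum1.symm
        _ ≤ ∑ _i : Fin p, ‖φ j0‖ ^ 2 :=
            Finset.sum_le_sum fun i _ => pow_le_pow_left₀ (norm_nonneg _) (hj0 i) 2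
        _ = (p : ℝ) * ‖φ j0‖ ^ 2 := by simp [mul_comm]
    have hmax' : 1 ≤ Real.sqrt p * ‖φ j0‖ := by
      have h2 : (1:ℝ) ≤ (Real.sqrt p * ‖φ j0‖) ^ 2 := by
        rw [mul_pow, Real.sq_sqrt (by positivity : (0:ℝ) ≤ (p:ℝ))]
        exact hmax
      nlinarith [norm_nonneg (φ j0), Real.sqrt_nonneg (p:ℝ),
        mul_nonneg hsp.le (norm_nonneg (φ j0))]
    -- every element of wSet j0 is ≤ √p * s'
    have hW : wNorm f x j0 ≤ Real.sqrt p * s' := by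
      rw [wNorm_def]
      apply csSup_le ⟨0, zero_mem_wSet f x j0⟩
      rintro r ⟨v, hv0, hv1, rfl⟩
      set vE := (WithLp.equiv 2 (Fin n → ℂ)).symm v with hvE
      have hinner : (inner ℂ (∑ i, φ i • g i) vE : ℂ)
          = (starRingEnd ℂ) (φ j0) * inner ℂ (g j0) vE := by
        rw [sum_inner]
        rw [Finset.sum_eq_single j0]
        · rw [inner_smul_left]
        · intro i _ hij
          rw [inner_smul_left, ← pdiff_eq, hv0 i hij, mul_zero]
        · simp
      have hCS : ‖φ j0‖ * ‖pdiff f x j0 v‖ ≤ s' := by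
        rw [pdiff_eq]
        calc ‖φ j0‖ * ‖(inner ℂ (g j0) vE : ℂ)‖
            = ‖(inner ℂ (∑ i, φ i • g i) vE : ℂ)‖ := by
              rw [hinner, norm_mul, RingHomIsometric.norm_map]
          _ ≤ ‖∑ i, φ i • g i‖ * ‖vE‖ := norm_inner_le_norm _ _
          _ ≤ s' * 1 := by
              apply mul_le_mul_of_nonneg_left _ (norm_nonneg _)
              rw [← eucNorm_eq]; exact hv1
          _ = s' := mul_one _
      calc ‖pdiff f x j0 v‖ = 1 * ‖pdiff f x j0 v‖ := (one_mul _).symm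
        _ ≤ (Real.sqrt p * ‖φ j0‖) * ‖pdiff f x j0 v‖ :=
            mul_le_mul_of_nonneg_right hmax' (norm_nonneg _)
        _ = Real.sqrt p * (‖φ j0‖ * ‖pdiff f x j0 v‖) := by ring
        _ ≤ Real.sqrt p * s' := mul_le_mul_of_nonneg_left hCS hsp.le
    calc kuoDist f x ≤ wNorm f x j0 := ciInf_le ⟨0, by rintro r ⟨i, rfl⟩; exact wNorm_nonneg f x i⟩ j0
      _ ≤ Real.sqrt p * s' := hW
  have h1 : kuoDist f x / Real.sqrt p ≤ sInf (rSet f x) := by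
    apply le_csInf (rSet_nonempty f x hp)
    intro s hs
    rw [div_le_iff₀ hsp, mul_comm]
    exact key s hs
  calc kuoDist f x = Real.sqrt p * (kuoDist f x / Real.sqrt p) := by
        field_simp
    _ ≤ Real.sqrt p * sInf (rSet f x) := mul_le_mul_of_nonneg_left h1 hsp.le

end KuoRabierAux

/-- the Kuo-distance and Rabier-function definitions of asymptotic
critical values coincide. -/
theorem kuo_rabier_acv_equiv {n p : ℕ} (hp : 1 ≤ p)
    (f : Fin p → MvPolynomial (Fin n) ℂ) (c : Fin p → ℂ) :
    (∃ x : ℕ → (Fin n → ℂ),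
        Tendsto (fun t => eucNorm (x t)) atTop atTop ∧
        Tendsto (fun t j => MvPolynomial.eval (x t) (f j)) atTop (nhds c) ∧
        Tendsto (fun t => eucNorm (x t) * kuoDist f (x t)) atTop (nhds 0)) ↔
    (∃ y : ℕ → (Fin n → ℂ),
        Tendsto (fun t => eucNorm (y t)) atTop atTop ∧
        Tendsto (fun t j => MvPolynomial.eval (y t) (f j)) atTop (nhds c) ∧
        Tendsto (fun t => eucNorm (y t) * rabier f (y t)) atTop (nhds 0)) := by
  constructor
  · rintro ⟨x, h1, h2, h3⟩
    refine ⟨x, h1, h2, ?_⟩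
    apply squeeze_zero (fun t => mul_nonneg (eucNorm_nonneg _) (rabier_nonneg f (x t)))
      (fun t => mul_le_mul_of_nonneg_left (rabier_le_kuoDist f (x t) hp) (eucNorm_nonneg _)) h3
  · rintro ⟨y, h1, h2, h3⟩
    refine ⟨y, h1, h2, ?_⟩
    have hb : Tendsto (fun t => Real.sqrt p * (eucNorm (y t) * rabier f (y t)))
        atTop (nhds 0) := by
      have := h3.const_mul (Real.sqrt p)
      simpa using this
    apply squeeze_zero (fun t => mul_nonneg (eucNorm_nonneg _) (kuoDist_nonneg f (y t)))
      (fun t => ?_) hb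
    calc eucNorm (y t) * kuoDist f (y t)
        ≤ eucNorm (y t) * (Real.sqrt p * rabier f (y t)) :=
          mul_le_mul_of_nonneg_left (kuoDist_le_sqrt_mul_rabier f (y t) hp) (eucNorm_nonneg _)
      _ = Real.sqrt p * (eucNorm (y t) * rabier f (y t)) := by ring
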